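/- Let Λ be a discrete index set, A ∈ ℂ^{Λ×Λ}, w₁, w₂ : Λ → (0,∞) weight functions, and p₀ ∈ (0,1]. Suppose there are C₁, C₂ > 0 such that Σ_{λ∈Λ} w₂(λ)^{p₀} |A_{λ,λ'}|^{p₀} ≤ C₁^{p₀} w₁(λ')^{p₀} for all λ' ∈ Λ, and Σ_{λ'∈Λ} |A_{λ,λ'}| w₁(λ')^{-1} ≤ C₂ w₂(λ)^{-1} for all λ ∈ Λ. Then the matrix operator (Aa)_λ := Σ_{λ'} A_{λ,λ'} a_{λ'} is bounded from ℓ^p_{w₁}(Λ) to ℓ^p_{w₂}(Λ) for all p ∈ [p₀,∞]; moreover its operator norm is at most C₁^{1/p} C₂^{1/p'} for p ∈ [1,∞] (where 1/p + 1/p' = 1 and 1/∞ = 0), and at most C₁ for p ∈ (p₀,1]. -/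

import Mathlib

open scoped ENNReal

lemma aux_tsum_rpow_le {ι : Type*} (f : ι → ℝ≥0∞) {p : ℝ} (hp : 0 < p) (hp1 : p ≤ 1) :
    (∑' i, f i) ^ p ≤ ∑' i, f i ^ p := by
  have hfin : ∀ s : Finset ι, (∑ i ∈ s, f i) ^ p ≤ ∑ i ∈ s, f i ^ p := by
    intro s
    induction s using Finset.cons_induction with
    | empty => simp [ENNReal.zero_rpow_of_pos hp]
    | cons a s ha ih =>
      rw [Finset.sum_cons, Finset.sum_cons]
      exact (ENNReal.rpow_add_le_add_rpow _ _ hp.le hp1).trans (by gcongr)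
  rw [ENNReal.tsum_eq_iSup_sum]
  have : (⨆ s : Finset ι, ∑ i ∈ s, f i) ^ p = ⨆ s : Finset ι, (∑ i ∈ s, f i) ^ p :=
    (ENNReal.orderIsoRpow p hp).map_iSup _
  rw [this]
  exact iSup_le fun s => (hfin s).trans (ENNReal.sum_le_tsum s)

lemma aux_tsum_inner_le {ι : Type*} {p : ℝ} (hp : 1 ≤ p) (w f : ι → ℝ≥0∞) :
    ∑' i, w i * f i ≤ (∑' i, w i) ^ (1 - p⁻¹) * (∑' i, w i * f i ^ p) ^ p⁻¹ := by
  rw [ENNReal.tsum_eq_iSup_sum]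
  refine iSup_le fun s => ?_
  refine (ENNReal.inner_le_weight_mul_Lp_of_nonneg s hp w f).trans ?_
  have h1 : (0:ℝ) ≤ 1 - p⁻¹ := by
    have : p⁻¹ ≤ 1 := inv_le_one_of_one_le₀ hp
    linarith
  gcongr <;> [exact ENNReal.sum_le_tsum s; exact ENNReal.sum_le_tsum s]

lemma aux_schur_core {Λ : Type*} (B : Λ → Λ → ℝ≥0∞) (C₁ C₂ : ℝ≥0∞)
    (hBtop : ∀ l l', B l l' ≠ ∞) (hC₂0 : C₂ ≠ 0) (hC₁0 : C₁ ≠ 0) (hC₂top : C₂ ≠ ∞)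
    {p₀ : ℝ} (hp₀ : 0 < p₀) (hp₀1 : p₀ ≤ 1)
    (hcol : ∀ l', ∑' l, B l l' ^ p₀ ≤ C₁ ^ p₀)
    (hrow : ∀ l, ∑' l', B l l' ≤ C₂)
    (b : Λ → ℝ≥0∞) (hbtop : ∀ l', b l' ≠ ∞) {p : ℝ} :
    (p₀ ≤ p → p ≤ 1 → ∑' l, (∑' l', B l l' * b l') ^ p ≤ C₁ ^ p * ∑' l', b l' ^ p) ∧
    (1 ≤ p → ∑' l, (∑' l', B l l' * b l') ^ p ≤ C₂ ^ (p - 1) * C₁ * ∑' l', b l' ^ p) := by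
  have hBC : ∀ l l', B l l' ≤ C₁ := fun l l' => by
    have h1 : B l l' ^ p₀ ≤ C₁ ^ p₀ := (ENNReal.le_tsum l).trans (hcol l')
    exact (ENNReal.rpow_le_rpow_iff hp₀).mp h1
  have hcol1 : ∀ l', ∑' l, B l l' ≤ C₁ := fun l' => by
    have := (aux_tsum_rpow_le (fun l => B l l') hp₀ hp₀1).trans (hcol l')
    exact (ENNReal.rpow_le_rpow_iff hp₀).mp this
  constructor
  · intro hp₀p hp1
    have hp : 0 < p := lt_of_lt_of_le hp₀ hp₀p
    have hcolp : ∀ l', ∑' l, B l l' ^ p ≤ C₁ ^ p := fun l' => by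
      calc ∑' l, B l l' ^ p = ∑' l, B l l' ^ p₀ * B l l' ^ (p - p₀) := by
            refine tsum_congr fun l => ?_
            rw [← ENNReal.rpow_add_of_nonneg _ _ hp₀.le (by linarith)]
            ring_nf
        _ ≤ ∑' l, B l l' ^ p₀ * C₁ ^ (p - p₀) :=
            ENNReal.tsum_le_tsum fun l =>
              mul_le_mul_right (ENNReal.rpow_le_rpow (hBC l l') (by linarith)) _
        _ = (∑' l, B l l' ^ p₀) * C₁ ^ (p - p₀) := ENNReal.tsum_mul_right
        _ ≤ C₁ ^ p₀ * C₁ ^ (p - p₀) := by gcongr; exact hcol l'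
        _ = C₁ ^ p := by
            rw [← ENNReal.rpow_add_of_nonneg _ _ hp₀.le (by linarith)]
            ring_nf
    calc ∑' l, (∑' l', B l l' * b l') ^ p
        ≤ ∑' l, ∑' l', (B l l' * b l') ^ p :=
          ENNReal.tsum_le_tsum fun l => aux_tsum_rpow_le _ hp hp1
      _ = ∑' l, ∑' l', B l l' ^ p * b l' ^ p := by
          refine tsum_congr fun l => tsum_congr fun l' => ?_
          exact ENNReal.mul_rpow_of_ne_top (hBtop l l') (hbtop l') p
      _ = ∑' l', ∑' l, B l l' ^ p * b l' ^ p := ENNReal.tsum_comm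
      _ = ∑' l', (∑' l, B l l' ^ p) * b l' ^ p := tsum_congr fun l' => ENNReal.tsum_mul_right
      _ ≤ ∑' l', C₁ ^ p * b l' ^ p := by gcongr with l'; exact hcolp l'
      _ = C₁ ^ p * ∑' l', b l' ^ p := ENNReal.tsum_mul_left
  · intro hp1
    have hp : 0 < p := lt_of_lt_of_le one_pos hp1
    by_cases hS : ∑' l', b l' ^ p = ∞
    · rw [hS, ENNReal.mul_top]
      · exact le_top
      · refine mul_ne_zero ?_ hC₁0
        simp [ENNReal.rpow_eq_zero_iff, hC₂0, hC₂top]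
    have hinner_top : ∀ l, ∑' l', B l l' * b l' ^ p ≠ ∞ := fun l => by
      have h1 : ∑' l', B l l' * b l' ^ p ≤ ∑' l', B l l' * (∑' k, b k ^ p) := by
        gcongr with l'
        exact ENNReal.le_tsum l'
      have h2 : ∑' l', B l l' * (∑' k, b k ^ p) = (∑' l', B l l') * (∑' k, b k ^ p) :=
        ENNReal.tsum_mul_right
      refine ne_top_of_le_ne_top ?_ (h1.trans_eq h2)
      exact ENNReal.mul_ne_top (ne_top_of_le_ne_top hC₂top (hrow l)) hS
    have hq : (0:ℝ) ≤ 1 - p⁻¹ := by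
      have : p⁻¹ ≤ 1 := inv_le_one_of_one_le₀ hp1
      linarith
    have key : ∀ l, (∑' l', B l l' * b l') ^ p ≤ C₂ ^ (p - 1) * ∑' l', B l l' * b l' ^ p := by
      intro l
      have h2 : ∑' l', B l l' * b l' ≤ C₂ ^ (1 - p⁻¹) * (∑' l', B l l' * b l' ^ p) ^ p⁻¹ := by
        refine (aux_tsum_inner_le hp1 (fun l' => B l l') b).trans ?_
        gcongr
        exact hrow l
      calc (∑' l', B l l' * b l') ^ p
          ≤ (C₂ ^ (1 - p⁻¹) * (∑' l', B l l' * b l' ^ p) ^ p⁻¹) ^ p :=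
            ENNReal.rpow_le_rpow h2 hp.le
        _ = (C₂ ^ (1 - p⁻¹)) ^ p * ((∑' l', B l l' * b l' ^ p) ^ p⁻¹) ^ p :=
            ENNReal.mul_rpow_of_ne_top
              (ENNReal.rpow_ne_top_of_nonneg hq hC₂top)
              (ENNReal.rpow_ne_top_of_nonneg (by positivity) (hinner_top l)) p
        _ = C₂ ^ (p - 1) * ∑' l', B l l' * b l' ^ p := by
            rw [← ENNReal.rpow_mul, ← ENNReal.rpow_mul, inv_mul_cancel₀ hp.ne', ENNReal.rpow_one]
            congr 2
            field_simp
    calc ∑' l, (∑' l', B l l' * b l') ^ p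
        ≤ ∑' l, C₂ ^ (p - 1) * ∑' l', B l l' * b l' ^ p := ENNReal.tsum_le_tsum key
      _ = C₂ ^ (p - 1) * ∑' l, ∑' l', B l l' * b l' ^ p := ENNReal.tsum_mul_left
      _ = C₂ ^ (p - 1) * ∑' l', ∑' l, B l l' * b l' ^ p := by rw [ENNReal.tsum_comm]
      _ = C₂ ^ (p - 1) * ∑' l', (∑' l, B l l') * b l' ^ p := by
          congr 1
          exact tsum_congr fun l' => ENNReal.tsum_mul_right
      _ ≤ C₂ ^ (p - 1) * ∑' l', C₁ * b l' ^ p := by gcongr with l'; exact hcol1 l'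
      _ = C₂ ^ (p - 1) * C₁ * ∑' l', b l' ^ p := by rw [ENNReal.tsum_mul_left, mul_assoc]

lemma aux_summable_of_ofReal {ι : Type*} {f : ι → ℝ} (hf : ∀ i, 0 ≤ f i)
    (h : ∑' i, ENNReal.ofReal (f i) ≠ ∞) : Summable f :=
  (ENNReal.summable_toReal h).congr fun i => ENNReal.toReal_ofReal (hf i)


/-- Weighted Schur test, part (c): if both Schur conditions
`Σ_λ (w₂(λ)|A_{λ,λ'}|)^{p₀} ≤ C₁^{p₀} w₁(λ')^{p₀}` and
`Σ_{λ'} |A_{λ,λ'}| w₁(λ')⁻¹ ≤ C₂ w₂(λ)⁻¹` hold, then `A` maps `ℓ^p_{w₁}(Λ)`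
boundedly to `ℓ^p_{w₂}(Λ)` for every `p ∈ [p₀,∞]`, with operator norm at most
`C₁^{1/p} C₂^{1/p'}` for `p ∈ [1,∞]` (where `1/p + 1/p' = 1`, `1/∞ = 0`) and at most
`C₁` for `p ∈ (p₀,1]`. -/
theorem stmt_4 {Λ : Type*} (A : Λ → Λ → ℂ) (w₁ w₂ : Λ → ℝ)
    (hw₁ : ∀ l : Λ, 0 < w₁ l) (hw₂ : ∀ l : Λ, 0 < w₂ l)
    (p₀ : ℝ) (hp₀ : 0 < p₀) (hp₀1 : p₀ ≤ 1)
    (C₁ C₂ : ℝ) (hC₁ : 0 < C₁) (hC₂ : 0 < C₂)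
    (hA₁ : ∀ l' : Λ, Summable (fun l : Λ => (w₂ l * ‖A l l'‖) ^ p₀) ∧
      ∑' l : Λ, (w₂ l * ‖A l l'‖) ^ p₀ ≤ C₁ ^ p₀ * w₁ l' ^ p₀)
    (hA₂ : ∀ l : Λ, Summable (fun l' : Λ => ‖A l l'‖ * (w₁ l')⁻¹) ∧
      ∑' l' : Λ, ‖A l l'‖ * (w₁ l')⁻¹ ≤ C₂ * (w₂ l)⁻¹) :
    -- boundedness for all finite `p ∈ [p₀,1]`, with some operator norm bound
    (∀ p : ℝ, p₀ ≤ p → p ≤ 1 → ∃ C : ℝ, ∀ a : Λ → ℂ,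
      Summable (fun l : Λ => (‖a l‖ * w₁ l) ^ p) →
        (∀ l : Λ, Summable (fun l' : Λ => A l l' * a l')) ∧
        Summable (fun l : Λ => (‖∑' l' : Λ, A l l' * a l'‖ * w₂ l) ^ p) ∧
        (∑' l : Λ, (‖∑' l' : Λ, A l l' * a l'‖ * w₂ l) ^ p) ^ (1 / p) ≤
          C * (∑' l : Λ, (‖a l‖ * w₁ l) ^ p) ^ (1 / p)) ∧
    -- operator norm at most `C₁` for `p ∈ (p₀,1]`
    (∀ p : ℝ, p₀ < p → p ≤ 1 → ∀ a : Λ → ℂ,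
      Summable (fun l : Λ => (‖a l‖ * w₁ l) ^ p) →
        (∑' l : Λ, (‖∑' l' : Λ, A l l' * a l'‖ * w₂ l) ^ p) ^ (1 / p) ≤
          C₁ * (∑' l : Λ, (‖a l‖ * w₁ l) ^ p) ^ (1 / p)) ∧
    -- boundedness with norm `C₁^{1/p} C₂^{1/p'}` for finite `p ∈ [1,∞)`
    (∀ p : ℝ, 1 ≤ p → ∀ a : Λ → ℂ,
      Summable (fun l : Λ => (‖a l‖ * w₁ l) ^ p) →
        (∀ l : Λ, Summable (fun l' : Λ => A l l' * a l')) ∧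
        Summable (fun l : Λ => (‖∑' l' : Λ, A l l' * a l'‖ * w₂ l) ^ p) ∧
        (∑' l : Λ, (‖∑' l' : Λ, A l l' * a l'‖ * w₂ l) ^ p) ^ (1 / p) ≤
          C₁ ^ (1 / p) * C₂ ^ (1 - 1 / p) *
            (∑' l : Λ, (‖a l‖ * w₁ l) ^ p) ^ (1 / p)) ∧
    -- the case `p = ∞`, with norm `C₁^0 C₂ = C₂`
    (∀ a : Λ → ℂ, ∀ Ca : ℝ, (∀ l : Λ, ‖a l‖ * w₁ l ≤ Ca) →
      (∀ l : Λ, Summable (fun l' : Λ => A l l' * a l')) ∧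
      ∀ l : Λ, ‖∑' l' : Λ, A l l' * a l'‖ * w₂ l ≤ C₂ * Ca) := by
  -- column condition in `ℝ≥0∞`
  have hcolE : ∀ l', ∑' l, ENNReal.ofReal (w₂ l * (‖A l l'‖ * (w₁ l')⁻¹)) ^ p₀
      ≤ ENNReal.ofReal C₁ ^ p₀ := by
    intro l'
    calc ∑' l, ENNReal.ofReal (w₂ l * (‖A l l'‖ * (w₁ l')⁻¹)) ^ p₀
        = ∑' l, ENNReal.ofReal ((w₂ l * ‖A l l'‖) ^ p₀) *
            ENNReal.ofReal (((w₁ l')⁻¹) ^ p₀) := by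
          refine tsum_congr fun l => ?_
          have h2 := hw₂ l
          have h1 := hw₁ l'
          rw [← ENNReal.ofReal_mul (by positivity),
            ← Real.mul_rpow (by positivity) (by positivity),
            ← mul_assoc, ENNReal.ofReal_rpow_of_nonneg (by positivity) hp₀.le]
      _ = ENNReal.ofReal (∑' l, (w₂ l * ‖A l l'‖) ^ p₀) *
            ENNReal.ofReal (((w₁ l')⁻¹) ^ p₀) := by
          rw [ENNReal.tsum_mul_right,
            ENNReal.ofReal_tsum_of_nonneg (fun l => by have := hw₂ l; positivity) (hA₁ l').1]
      _ ≤ ENNReal.ofReal (C₁ ^ p₀ * w₁ l' ^ p₀) * ENNReal.ofReal (((w₁ l')⁻¹) ^ p₀) := by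
          gcongr
          exact (hA₁ l').2
      _ = ENNReal.ofReal C₁ ^ p₀ := by
          have h1 := hw₁ l'
          rw [← ENNReal.ofReal_mul (by positivity),
            ENNReal.ofReal_rpow_of_nonneg hC₁.le hp₀.le]
          congr 1
          rw [mul_assoc, ← Real.mul_rpow (hw₁ l').le (by positivity),
            mul_inv_cancel₀ (hw₁ l').ne', Real.one_rpow, mul_one]
  -- row condition in `ℝ≥0∞`
  have hrowE : ∀ l, ∑' l', ENNReal.ofReal (w₂ l * (‖A l l'‖ * (w₁ l')⁻¹))
      ≤ ENNReal.ofReal C₂ := by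
    intro l
    calc ∑' l', ENNReal.ofReal (w₂ l * (‖A l l'‖ * (w₁ l')⁻¹))
        = ENNReal.ofReal (w₂ l) *
            ENNReal.ofReal (∑' l', ‖A l l'‖ * (w₁ l')⁻¹) := by
          rw [ENNReal.ofReal_tsum_of_nonneg (fun l' => by have := hw₁ l'; positivity) (hA₂ l).1,
            ← ENNReal.tsum_mul_left]
          exact tsum_congr fun l' => ENNReal.ofReal_mul (hw₂ l).le
      _ ≤ ENNReal.ofReal (w₂ l) * ENNReal.ofReal (C₂ * (w₂ l)⁻¹) := by
          gcongr
          exact (hA₂ l).2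
      _ = ENNReal.ofReal C₂ := by
          rw [← ENNReal.ofReal_mul (hw₂ l).le]
          congr 1
          rw [mul_comm C₂ (w₂ l)⁻¹, ← mul_assoc, mul_inv_cancel₀ (hw₂ l).ne', one_mul]
  -- common facts per `a` and `p`
  have common : ∀ (a : Λ → ℂ) (p : ℝ), 0 < p →
      Summable (fun l => (‖a l‖ * w₁ l) ^ p) →
      (∀ l, Summable fun l' => A l l' * a l') ∧
      (∑' l', ENNReal.ofReal (‖a l'‖ * w₁ l') ^ p
        = ENNReal.ofReal (∑' l, (‖a l‖ * w₁ l) ^ p)) ∧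
      (∀ K : ℝ, 0 ≤ K →
        (∑' l, (∑' l', ENNReal.ofReal (w₂ l * (‖A l l'‖ * (w₁ l')⁻¹)) *
            ENNReal.ofReal (‖a l'‖ * w₁ l')) ^ p
          ≤ ENNReal.ofReal K * ENNReal.ofReal (∑' l, (‖a l‖ * w₁ l) ^ p)) →
        Summable (fun l => (‖∑' l' : Λ, A l l' * a l'‖ * w₂ l) ^ p) ∧
        (∑' l, (‖∑' l' : Λ, A l l' * a l'‖ * w₂ l) ^ p) ^ (1 / p) ≤
          K ^ (1 / p) * (∑' l, (‖a l‖ * w₁ l) ^ p) ^ (1 / p)) := by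
    intro a p hp hsum
    have hS_eq : ∑' l', ENNReal.ofReal (‖a l'‖ * w₁ l') ^ p
        = ENNReal.ofReal (∑' l, (‖a l‖ * w₁ l) ^ p) := by
      rw [ENNReal.ofReal_tsum_of_nonneg (fun l => by have := hw₁ l; positivity) hsum]
      exact tsum_congr fun l =>
        ENNReal.ofReal_rpow_of_nonneg (by have := hw₁ l; positivity) hp.le
    have hSne : (∑' l', ENNReal.ofReal (‖a l'‖ * w₁ l') ^ p) ≠ ∞ := by
      rw [hS_eq]; exact ENNReal.ofReal_ne_top
    have hble : ∀ l', ENNReal.ofReal (‖a l'‖ * w₁ l')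
        ≤ (∑' k, ENNReal.ofReal (‖a k‖ * w₁ k) ^ p) ^ p⁻¹ := by
      intro l'
      have h1 : ENNReal.ofReal (‖a l'‖ * w₁ l') ^ p
          ≤ ∑' k, ENNReal.ofReal (‖a k‖ * w₁ k) ^ p := ENNReal.le_tsum l'
      have h2 := ENNReal.rpow_le_rpow h1 (inv_nonneg.mpr hp.le)
      rwa [ENNReal.rpow_rpow_inv hp.ne'] at h2
    have hnnorm_eq : ∀ l l', (‖A l l' * a l'‖₊ : ℝ≥0∞)
        = ENNReal.ofReal (‖A l l'‖ * (w₁ l')⁻¹) *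
          ENNReal.ofReal (‖a l'‖ * w₁ l') := by
      intro l l'
      have h1 := hw₁ l'
      rw [← ENNReal.ofReal_mul (by positivity), ← enorm_eq_nnnorm, ← ofReal_norm]
      congr 1
      rw [norm_mul,
        mul_mul_mul_comm, inv_mul_cancel₀ (hw₁ l').ne', mul_one]
    have hnorm_tsum_ne : ∀ l, (∑' l', (‖A l l' * a l'‖₊ : ℝ≥0∞)) ≠ ∞ := by
      intro l
      have hb1 : ∑' l', (‖A l l' * a l'‖₊ : ℝ≥0∞)
          ≤ ENNReal.ofReal (∑' l', ‖A l l'‖ * (w₁ l')⁻¹) *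
            (∑' k, ENNReal.ofReal (‖a k‖ * w₁ k) ^ p) ^ p⁻¹ := by
        calc ∑' l', (‖A l l' * a l'‖₊ : ℝ≥0∞)
            = ∑' l', ENNReal.ofReal (‖A l l'‖ * (w₁ l')⁻¹) *
                ENNReal.ofReal (‖a l'‖ * w₁ l') := tsum_congr (hnnorm_eq l)
          _ ≤ ∑' l', ENNReal.ofReal (‖A l l'‖ * (w₁ l')⁻¹) *
                (∑' k, ENNReal.ofReal (‖a k‖ * w₁ k) ^ p) ^ p⁻¹ :=
              ENNReal.tsum_le_tsum fun l' => mul_le_mul_right (hble l') _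
          _ = (∑' l', ENNReal.ofReal (‖A l l'‖ * (w₁ l')⁻¹)) *
                (∑' k, ENNReal.ofReal (‖a k‖ * w₁ k) ^ p) ^ p⁻¹ :=
              ENNReal.tsum_mul_right
          _ = ENNReal.ofReal (∑' l', ‖A l l'‖ * (w₁ l')⁻¹) *
                (∑' k, ENNReal.ofReal (‖a k‖ * w₁ k) ^ p) ^ p⁻¹ := by
              rw [ENNReal.ofReal_tsum_of_nonneg
                (fun l' => by have := hw₁ l'; positivity) (hA₂ l).1]
      exact ne_top_of_le_ne_top (ENNReal.mul_ne_top ENNReal.ofReal_ne_top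
        (ENNReal.rpow_ne_top_of_nonneg (by positivity) hSne)) hb1
    have hnormsum : ∀ l, Summable fun l' => ‖A l l' * a l'‖ := by
      intro l
      have h := ENNReal.tsum_coe_ne_top_iff_summable.mp (hnorm_tsum_ne l)
      exact (NNReal.summable_coe.mpr h).congr fun l' => coe_nnnorm _
    have hsummA : ∀ l, Summable fun l' => A l l' * a l' :=
      fun l => (hnormsum l).of_norm
    have hkey : ∀ l, ENNReal.ofReal (‖∑' l', A l l' * a l'‖ * w₂ l)
        ≤ ∑' l', ENNReal.ofReal (w₂ l * (‖A l l'‖ * (w₁ l')⁻¹)) *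
            ENNReal.ofReal (‖a l'‖ * w₁ l') := by
      intro l
      calc ENNReal.ofReal (‖∑' l', A l l' * a l'‖ * w₂ l)
          ≤ ENNReal.ofReal ((∑' l', ‖A l l' * a l'‖) * w₂ l) := by
            apply ENNReal.ofReal_le_ofReal
            apply mul_le_mul_of_nonneg_right _ (hw₂ l).le
            exact norm_tsum_le_tsum_norm (hnormsum l)
        _ = ∑' l', ENNReal.ofReal (w₂ l) * (‖A l l' * a l'‖₊ : ℝ≥0∞) := by
            rw [mul_comm, ENNReal.ofReal_mul (hw₂ l).le,
              ENNReal.ofReal_tsum_of_nonneg (fun l' => norm_nonneg _) (hnormsum l),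
              ← ENNReal.tsum_mul_left]
            exact tsum_congr fun l' => by rw [ofReal_norm, enorm_eq_nnnorm]
        _ = ∑' l', ENNReal.ofReal (w₂ l * (‖A l l'‖ * (w₁ l')⁻¹)) *
              ENNReal.ofReal (‖a l'‖ * w₁ l') := by
            refine tsum_congr fun l' => ?_
            rw [hnnorm_eq l l', ← mul_assoc, ← ENNReal.ofReal_mul (hw₂ l).le]
    refine ⟨hsummA, hS_eq, ?_⟩
    intro K hK hest
    have hptw : ∀ l, ENNReal.ofReal ((‖∑' l', A l l' * a l'‖ * w₂ l) ^ p)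
        ≤ (∑' l', ENNReal.ofReal (w₂ l * (‖A l l'‖ * (w₁ l')⁻¹)) *
            ENNReal.ofReal (‖a l'‖ * w₁ l')) ^ p := by
      intro l
      have h2 := hw₂ l
      rw [← ENNReal.ofReal_rpow_of_nonneg (by positivity) hp.le]
      exact ENNReal.rpow_le_rpow (hkey l) hp.le
    have hest2 : ∑' l, ENNReal.ofReal ((‖∑' l', A l l' * a l'‖ * w₂ l) ^ p)
        ≤ ENNReal.ofReal (K * ∑' l, (‖a l‖ * w₁ l) ^ p) := by
      rw [ENNReal.ofReal_mul hK]
      exact (ENNReal.tsum_le_tsum hptw).trans hest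
    have hsum2 : Summable (fun l => (‖∑' l' : Λ, A l l' * a l'‖ * w₂ l) ^ p) :=
      aux_summable_of_ofReal (fun l => by have := hw₂ l; positivity)
        (ne_top_of_le_ne_top ENNReal.ofReal_ne_top hest2)
    have hbnn : (0:ℝ) ≤ ∑' l, (‖a l‖ * w₁ l) ^ p :=
      tsum_nonneg fun l => Real.rpow_nonneg
        (mul_nonneg (norm_nonneg _) (hw₁ l).le) p
    have hunn : (0:ℝ) ≤ ∑' l, (‖∑' l' : Λ, A l l' * a l'‖ * w₂ l) ^ p :=
      tsum_nonneg fun l => Real.rpow_nonneg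
        (mul_nonneg (norm_nonneg _) (hw₂ l).le) p
    have hreal : ∑' l, (‖∑' l' : Λ, A l l' * a l'‖ * w₂ l) ^ p
        ≤ K * ∑' l, (‖a l‖ * w₁ l) ^ p := by
      rw [← ENNReal.ofReal_le_ofReal_iff (mul_nonneg hK hbnn),
        ENNReal.ofReal_tsum_of_nonneg (fun l => by have := hw₂ l; positivity) hsum2]
      exact hest2
    refine ⟨hsum2, ?_⟩
    have h := Real.rpow_le_rpow (z := 1 / p) hunn hreal (by positivity)
    rwa [Real.mul_rpow hK hbnn] at h
  -- `ofReal` positivity facts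
  have hoC₁ : (ENNReal.ofReal C₁) ≠ 0 := (ENNReal.ofReal_pos.mpr hC₁).ne'
  have hoC₂ : (ENNReal.ofReal C₂) ≠ 0 := (ENNReal.ofReal_pos.mpr hC₂).ne'
  -- part I master
  have main1 : ∀ p : ℝ, p₀ ≤ p → p ≤ 1 → ∀ a : Λ → ℂ,
      Summable (fun l : Λ => (‖a l‖ * w₁ l) ^ p) →
        (∀ l : Λ, Summable (fun l' : Λ => A l l' * a l')) ∧
        Summable (fun l : Λ => (‖∑' l' : Λ, A l l' * a l'‖ * w₂ l) ^ p) ∧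
        (∑' l : Λ, (‖∑' l' : Λ, A l l' * a l'‖ * w₂ l) ^ p) ^ (1 / p) ≤
          C₁ * (∑' l : Λ, (‖a l‖ * w₁ l) ^ p) ^ (1 / p) := by
    intro p hp₀p hp1 a hsum
    have hp : 0 < p := lt_of_lt_of_le hp₀ hp₀p
    obtain ⟨h1, h3, h2⟩ := common a p hp hsum
    have hcore := (aux_schur_core
      (fun l l' => ENNReal.ofReal (w₂ l * (‖A l l'‖ * (w₁ l')⁻¹)))
      (ENNReal.ofReal C₁) (ENNReal.ofReal C₂)
      (fun _ _ => ENNReal.ofReal_ne_top) hoC₂ hoC₁ ENNReal.ofReal_ne_top hp₀ hp₀1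
      hcolE hrowE
      (fun l' => ENNReal.ofReal (‖a l'‖ * w₁ l'))
      (fun _ => ENNReal.ofReal_ne_top) (p := p)).1 hp₀p hp1
    rw [h3, ENNReal.ofReal_rpow_of_nonneg hC₁.le hp.le] at hcore
    obtain ⟨hsum2, hfin⟩ := h2 (C₁ ^ p) (by positivity) hcore
    refine ⟨h1, hsum2, ?_⟩
    have hCp : (C₁ ^ p) ^ (1 / p) = C₁ := by
      rw [← Real.rpow_mul hC₁.le, mul_one_div_cancel hp.ne', Real.rpow_one]
    rwa [hCp] at hfin
  refine ⟨fun p h1 h2 => ⟨C₁, main1 p h1 h2⟩,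
    fun p h1 h2 a ha => (main1 p h1.le h2 a ha).2.2, ?_, ?_⟩
  · -- part II : 1 ≤ p
    intro p hp1 a hsum
    have hp : 0 < p := lt_of_lt_of_le one_pos hp1
    obtain ⟨h1, h3, h2⟩ := common a p hp hsum
    have hcore := (aux_schur_core
      (fun l l' => ENNReal.ofReal (w₂ l * (‖A l l'‖ * (w₁ l')⁻¹)))
      (ENNReal.ofReal C₁) (ENNReal.ofReal C₂)
      (fun _ _ => ENNReal.ofReal_ne_top) hoC₂ hoC₁ ENNReal.ofReal_ne_top hp₀ hp₀1
      hcolE hrowE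
      (fun l' => ENNReal.ofReal (‖a l'‖ * w₁ l'))
      (fun _ => ENNReal.ofReal_ne_top) (p := p)).2 hp1
    rw [h3, ENNReal.ofReal_rpow_of_nonneg hC₂.le (by linarith),
      ← ENNReal.ofReal_mul (by positivity)] at hcore
    obtain ⟨hsum2, hfin⟩ := h2 (C₂ ^ (p - 1) * C₁) (by positivity) hcore
    refine ⟨h1, hsum2, ?_⟩
    have hexp : (p - 1) * (1 / p) = 1 - 1 / p := by
      rw [mul_one_div, sub_div, div_self hp.ne']
    have hCp : (C₂ ^ (p - 1) * C₁) ^ (1 / p) = C₁ ^ (1 / p) * C₂ ^ (1 - 1 / p) := by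
      rw [Real.mul_rpow (by positivity) hC₁.le, ← Real.rpow_mul hC₂.le, hexp, mul_comm]
    rwa [hCp] at hfin
  · -- part ∞
    intro a Ca hCa
    have habs : ∀ l', ‖a l'‖ ≤ Ca * (w₁ l')⁻¹ := by
      intro l'
      have h := (le_div_iff₀ (hw₁ l')).mpr (hCa l')
      rwa [div_eq_mul_inv] at h
    have hns : ∀ l, Summable fun l' => ‖A l l' * a l'‖ := by
      intro l
      refine Summable.of_nonneg_of_le (fun l' => norm_nonneg _) (fun l' => ?_)
        ((hA₂ l).1.mul_left Ca)
      rw [norm_mul]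
      calc ‖A l l'‖ * ‖a l'‖
          ≤ ‖A l l'‖ * (Ca * (w₁ l')⁻¹) :=
            mul_le_mul_of_nonneg_left (habs l') (by positivity)
        _ = Ca * (‖A l l'‖ * (w₁ l')⁻¹) := by ring
    have hsummA : ∀ l, Summable fun l' => A l l' * a l' := fun l => (hns l).of_norm
    refine ⟨hsummA, fun l => ?_⟩
    have hCa0 : 0 ≤ Ca := le_trans (by have := hw₁ l; positivity) (hCa l)
    have h1 : ‖∑' l', A l l' * a l'‖ ≤ ∑' l', ‖A l l' * a l'‖ := by
      exact norm_tsum_le_tsum_norm (hns l)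
    have h2 : ∑' l', ‖A l l' * a l'‖ ≤ Ca * ∑' l', ‖A l l'‖ * (w₁ l')⁻¹ := by
      rw [← tsum_mul_left]
      refine Summable.tsum_le_tsum (fun l' => ?_) (hns l) ((hA₂ l).1.mul_left Ca)
      rw [norm_mul]
      calc ‖A l l'‖ * ‖a l'‖
          ≤ ‖A l l'‖ * (Ca * (w₁ l')⁻¹) :=
            mul_le_mul_of_nonneg_left (habs l') (by positivity)
        _ = Ca * (‖A l l'‖ * (w₁ l')⁻¹) := by ring
    calc ‖∑' l', A l l' * a l'‖ * w₂ l
        ≤ (Ca * ∑' l', ‖A l l'‖ * (w₁ l')⁻¹) * w₂ l :=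
          mul_le_mul_of_nonneg_right (h1.trans h2) (hw₂ l).le
      _ ≤ (Ca * (C₂ * (w₂ l)⁻¹)) * w₂ l := by
          apply mul_le_mul_of_nonneg_right _ (hw₂ l).le
          exact mul_le_mul_of_nonneg_left (hA₂ l).2 hCa0
      _ = C₂ * Ca := by
          rw [mul_assoc, mul_assoc, inv_mul_cancel₀ (hw₂ l).ne', mul_one, mul_comm]
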